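/- arXiv:1407.2783 — 5 statements merged into one kernel-verified Lean document; each statement's English description precedes it below -/
import Mathlib

section
/- Let G₁ and G₂ be groups and let X be a bitransitive G₁-G₂-biset. Then for every x ∈ X the left stabilizer Stab_l(x) is a normal subgroup of G₁ and the right stabilizer Stab_r(x) is a normal subgroup of G₂. -/
/-- The left stabilizer of a point `x` in a set with a left `G₁`-action `l`,
as a subgroup of `G₁`. -/
def stabL {G₁ X : Type*} [Group G₁] (l : G₁ → X → X)
    (h1 : ∀ x, l 1 x = x) (hmul : ∀ g g' x, l (g * g') x = l g (l g' x))
    (x : X) : Subgroup G₁ where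
  carrier := {g | l g x = x}
  one_mem' := h1 x
  mul_mem' := by
    intro a b ha hb
    simp only [Set.mem_setOf_eq] at *
    rw [hmul, hb, ha]
  inv_mem' := by
    intro a ha
    simp only [Set.mem_setOf_eq] at *
    calc l a⁻¹ x = l a⁻¹ (l a x) := by rw [ha]
      _ = l (a⁻¹ * a) x := (hmul _ _ _).symm
      _ = x := by rw [inv_mul_cancel, h1]

/-- The right stabilizer of a point `x` in a set with a right `G₂`-action `r`,
as a subgroup of `G₂`. -/
def stabR {G₂ X : Type*} [Group G₂] (r : X → G₂ → X)
    (h1 : ∀ x, r x 1 = x) (hmul : ∀ x h h', r x (h * h') = r (r x h) h')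
    (x : X) : Subgroup G₂ where
  carrier := {h | r x h = x}
  one_mem' := h1 x
  mul_mem' := by
    intro a b ha hb
    simp only [Set.mem_setOf_eq] at *
    rw [hmul, ha, hb]
  inv_mem' := by
    intro a ha
    simp only [Set.mem_setOf_eq] at *
    calc r x a⁻¹ = r (r x a) a⁻¹ := by rw [ha]
      _ = r x (a * a⁻¹) := (hmul _ _ _).symm
      _ = x := by rw [mul_inv_cancel, h1]

/-- If `X` is a bitransitive `G₁`-`G₂`-biset, then for every `x ∈ X` the left stabilizer
is a normal subgroup of `G₁` and the right stabilizer is a normal subgroup of `G₂`. -/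
theorem bitransitive_biset_stabilizers_normal
    {G₁ G₂ X : Type*} [Group G₁] [Group G₂]
    (l : G₁ → X → X) (r : X → G₂ → X)
    (hl1 : ∀ x, l 1 x = x) (hlmul : ∀ g g' x, l (g * g') x = l g (l g' x))
    (hr1 : ∀ x, r x 1 = x) (hrmul : ∀ x h h', r x (h * h') = r (r x h) h')
    (hcompat : ∀ g x h, r (l g x) h = l g (r x h))
    (hltrans : ∀ x y : X, ∃ g : G₁, l g x = y)
    (hrtrans : ∀ x y : X, ∃ h : G₂, r x h = y)
    (x : X) :
    (stabL l hl1 hlmul x).Normal ∧ (stabR r hr1 hrmul x).Normal := by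
  constructor
  · constructor
    intro a ha g
    show l (g * a * g⁻¹) x = x
    obtain ⟨h, hh⟩ := hrtrans x (l g⁻¹ x)
    have key : l a (l g⁻¹ x) = l g⁻¹ x := by
      rw [← hh, ← hcompat, ha, hh]
    have : l (g * a * g⁻¹) x = l g (l a (l g⁻¹ x)) := by
      rw [hlmul, hlmul]
    rw [this, key, ← hlmul, mul_inv_cancel, hl1]
  · constructor
    intro a ha h
    show r x (h * a * h⁻¹) = x
    obtain ⟨g, hg⟩ := hltrans x (r x h)
    have key : r (r x h) a = r x h := by
      rw [← hg, hcompat]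
      have : r x a = x := ha
      rw [this, hg]
    have : r x (h * a * h⁻¹) = r (r (r x h) a) h⁻¹ := by
      rw [mul_assoc, hrmul, hrmul]
    rw [this, key, ← hrmul, mul_inv_cancel, hr1]
end

section
/- Let G₁ and G₂ be groups, X a bitransitive G₁-G₂-biset, and x ∈ X. For every g ∈ G₁ there exists h ∈ G₂ with g·x = x·h; the coset h·Stab_r(x) does not depend on the choice of such h; the resulting map G₁ → G₂/Stab_r(x), g ↦ h·Stab_r(x), is a surjective group homomorphism with kernel Stab_l(x); consequently it induces a group isomorphism G₁/Stab_l(x) ≅ G₂/Stab_r(x). -/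
/-- For a bitransitive `G₁`-`G₂`-biset `X` and `x ∈ X`: every `g ∈ G₁` satisfies
`g·x = x·h` for some `h ∈ G₂`; the coset `h·Stab_r(x)` does not depend on the choice of `h`;
the resulting map `G₁ → G₂ ⧸ Stab_r(x)` is a surjective group homomorphism with kernel
`Stab_l(x)`; consequently it induces a group isomorphism
`G₁ ⧸ Stab_l(x) ≃* G₂ ⧸ Stab_r(x)`. -/
theorem bitransitive_biset_induced_isomorphism
    {G₁ G₂ X : Type*} [Group G₁] [Group G₂]
    (l : G₁ → X → X) (r : X → G₂ → X)
    (hl1 : ∀ x, l 1 x = x) (hlmul : ∀ g g' x, l (g * g') x = l g (l g' x))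
    (hr1 : ∀ x, r x 1 = x) (hrmul : ∀ x h h', r x (h * h') = r (r x h) h')
    (hcompat : ∀ g x h, r (l g x) h = l g (r x h))
    (hltrans : ∀ x y : X, ∃ g : G₁, l g x = y)
    (hrtrans : ∀ x y : X, ∃ h : G₂, r x h = y)
    (x : X)
    [(stabL l hl1 hlmul x).Normal] [(stabR r hr1 hrmul x).Normal] :
    (∀ g : G₁, ∃ h : G₂, l g x = r x h) ∧
    ∃ φ : G₁ →* G₂ ⧸ stabR r hr1 hrmul x,
      (∀ (g : G₁) (h : G₂), l g x = r x h → φ g = QuotientGroup.mk h) ∧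
      Function.Surjective φ ∧
      φ.ker = stabL l hl1 hlmul x ∧
      Nonempty ((G₁ ⧸ stabL l hl1 hlmul x) ≃* (G₂ ⧸ stabR r hr1 hrmul x)) := by
  classical
  have hex : ∀ g : G₁, ∃ h : G₂, l g x = r x h := fun g => (hrtrans x (l g x)).imp fun h hh => hh.symm
  -- well-definedness
  have hmem : ∀ h : G₂, h ∈ stabR r hr1 hrmul x ↔ r x h = x := fun _ => Iff.rfl
  have hwd : ∀ h h' : G₂, r x h = r x h' →
      (QuotientGroup.mk h : G₂ ⧸ stabR r hr1 hrmul x) = QuotientGroup.mk h' := by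
    intro h h' hhh
    rw [QuotientGroup.eq]
    have : r x (h * h'⁻¹) = x := by
      rw [hrmul, hhh, ← hrmul, mul_inv_cancel, hr1]
    have hmemN : h * h'⁻¹ ∈ stabR r hr1 hrmul x := this
    have := (Subgroup.Normal.mem_comm_iff ‹(stabR r hr1 hrmul x).Normal›).mp hmemN
    -- this : h'⁻¹ * h ∈ N; we need h⁻¹ * h'
    simpa [mul_inv_rev] using inv_mem this
  set f : G₁ → G₂ := fun g => Classical.choose (hex g) with hf
  have hfspec : ∀ g, l g x = r x (f g) := fun g => Classical.choose_spec (hex g)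
  have key : ∀ (g : G₁) (h : G₂), l g x = r x h →
      (QuotientGroup.mk (f g) : G₂ ⧸ stabR r hr1 hrmul x) = QuotientGroup.mk h := by
    intro g h hgh
    exact hwd _ _ ((hfspec g).symm.trans hgh)
  refine ⟨hex, ?_⟩
  refine ⟨{ toFun := fun g => QuotientGroup.mk (f g)
            map_one' := ?_
            map_mul' := ?_ }, ?_, ?_, ?_, ?_⟩
  · have : l 1 x = r x 1 := by rw [hl1, hr1]
    simpa using key 1 1 this
  · intro g g'
    have : l (g * g') x = r x (f g * f g') := by
      rw [hlmul, hfspec g', ← hcompat, hfspec g, ← hrmul]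
    simpa using key (g * g') (f g * f g') this
  · intro g h hgh
    exact key g h hgh
  · intro q
    induction q using QuotientGroup.induction_on with
    | H h =>
      obtain ⟨g, hg⟩ := hltrans x (r x h)
      exact ⟨g, key g h hg⟩
  · ext g
    simp only [MonoidHom.mem_ker, MonoidHom.coe_mk, OneHom.coe_mk]
    constructor
    · intro hg
      have : (QuotientGroup.mk (f g) : G₂ ⧸ stabR r hr1 hrmul x) = QuotientGroup.mk 1 := by
        exact hg
      rw [QuotientGroup.eq] at this
      have hfmem : f g ∈ stabR r hr1 hrmul x := by simpa using inv_mem this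
      have : r x (f g) = x := hfmem
      show l g x = x
      rw [hfspec g, this]
    · intro hg
      have hgx : l g x = x := hg
      have : l g x = r x 1 := by rw [hgx, hr1]
      have := key g 1 this
      exact this
  · have hker : (⟨⟨fun g => QuotientGroup.mk (f g), by
        have : l (1:G₁) x = r x 1 := by rw [hl1, hr1]
        simpa using key 1 1 this⟩, by
        intro g g'
        have : l (g * g') x = r x (f g * f g') := by
          rw [hlmul, hfspec g', ← hcompat, hfspec g, ← hrmul]
        simpa using key (g * g') (f g * f g') this⟩ :
        G₁ →* G₂ ⧸ stabR r hr1 hrmul x).ker = stabL l hl1 hlmul x := by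
      ext g
      simp only [MonoidHom.mem_ker, MonoidHom.coe_mk, OneHom.coe_mk]
      constructor
      · intro hg
        have : (QuotientGroup.mk (f g) : G₂ ⧸ stabR r hr1 hrmul x) = QuotientGroup.mk 1 := by
          simpa using hg
        rw [QuotientGroup.eq] at this
        have hfmem : f g ∈ stabR r hr1 hrmul x := by simpa using inv_mem this
        have : r x (f g) = x := hfmem
        show l g x = x
        rw [hfspec g, this]
      · intro hg
        have hgx : l g x = x := hg
        have : l g x = r x 1 := by rw [hgx, hr1]
        simpa using key g 1 this
    have hsurj : Function.Surjective (⟨⟨fun g => QuotientGroup.mk (f g), by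
        have : l (1:G₁) x = r x 1 := by rw [hl1, hr1]
        simpa using key 1 1 this⟩, by
        intro g g'
        have : l (g * g') x = r x (f g * f g') := by
          rw [hlmul, hfspec g', ← hcompat, hfspec g, ← hrmul]
        simpa using key (g * g') (f g * f g') this⟩ :
        G₁ →* G₂ ⧸ stabR r hr1 hrmul x) := by
      intro q
      induction q using QuotientGroup.induction_on with
      | H h =>
        obtain ⟨g, hg⟩ := hltrans x (r x h)
        exact ⟨g, key g h hg⟩
    exact ⟨(QuotientGroup.quotientMulEquivOfEq hker.symm).trans
      (QuotientGroup.quotientKerEquivOfSurjective _ hsurj)⟩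
end

section
/- Let G₁ be a group, G₂ a finite group, and X a G₁-G₂-biset whose right G₂-action is transitive. Fix x ∈ X and set H = Stab_r(x). Then: (i) every n ∈ G₂ for which there exists g ∈ G₁ with g·x = x·n lies in the normalizer N_{G₂}(H); (ii) there is a unique group homomorphism π : G₁ → N_{G₂}(H)/H such that for all g ∈ G₁ and all n ∈ N_{G₂}(H), π(g) = nH implies g·x = x·n; (iii) the kernel of π equals Stab_l(x). -/
/-- Let `G₁` be a group, `G₂` a finite group, and `X` a `G₁`-`G₂`-biset whose right
`G₂`-action is transitive. Fix `x ∈ X` and set `H = Stab_r(x)`. Then (i) every `n ∈ G₂`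
with `g·x = x·n` for some `g ∈ G₁` lies in the normalizer `N_{G₂}(H)`; (ii) there is a
unique group homomorphism `π : G₁ → N_{G₂}(H)/H` such that `π(g) = nH` implies
`g·x = x·n`; and (iii) the kernel of `π` equals `Stab_l(x)`. -/
theorem biset_normalizer_homomorphism
    {G₁ G₂ X : Type*} [Group G₁] [Group G₂] [Finite G₂]
    (l : G₁ → X → X) (r : X → G₂ → X)
    (hl1 : ∀ x, l 1 x = x) (hlmul : ∀ g g' x, l (g * g') x = l g (l g' x))
    (hr1 : ∀ x, r x 1 = x) (hrmul : ∀ x h h', r x (h * h') = r (r x h) h')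
    (hcompat : ∀ g x h, r (l g x) h = l g (r x h))
    (hrtrans : ∀ x y : X, ∃ h : G₂, r x h = y)
    (x : X) :
    (∀ n : G₂, (∃ g : G₁, l g x = r x n) → n ∈ Subgroup.normalizer (stabR r hr1 hrmul x : Set G₂)) ∧
    (∃! π : G₁ →* Subgroup.normalizer (stabR r hr1 hrmul x : Set G₂) ⧸
        (stabR r hr1 hrmul x).subgroupOf (Subgroup.normalizer (stabR r hr1 hrmul x : Set G₂)),
      ∀ (g : G₁) (n : Subgroup.normalizer (stabR r hr1 hrmul x : Set G₂)),
        π g = QuotientGroup.mk n → l g x = r x (n : G₂)) ∧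
    (∀ π : G₁ →* Subgroup.normalizer (stabR r hr1 hrmul x : Set G₂) ⧸
        (stabR r hr1 hrmul x).subgroupOf (Subgroup.normalizer (stabR r hr1 hrmul x : Set G₂)),
      (∀ (g : G₁) (n : Subgroup.normalizer (stabR r hr1 hrmul x : Set G₂)),
        π g = QuotientGroup.mk n → l g x = r x (n : G₂)) →
      π.ker = stabL l hl1 hlmul x) := by
  
  classical
  set H := stabR r hr1 hrmul x with hH
  have memH : ∀ n : G₂, n ∈ H ↔ r x n = x := fun _ => Iff.rfl
  -- if l g x = r x n then conjugation by n preserves H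
  have fix : ∀ (g : G₁) (n : G₂), l g x = r x n →
      ∀ h : G₂, r x h = x → r x (n * h * n⁻¹) = x := by
    intro g n hg h hh
    have hfix : r (l g x) h = l g x := by rw [hcompat, hh]
    calc r x (n * h * n⁻¹) = r (r (r x n) h) n⁻¹ := by rw [hrmul, hrmul]
      _ = r (r (l g x) h) n⁻¹ := by rw [hg]
      _ = r (l g x) n⁻¹ := by rw [hfix]
      _ = r (r x n) n⁻¹ := by rw [hg]
      _ = r x (n * n⁻¹) := (hrmul _ _ _).symm
      _ = x := by rw [mul_inv_cancel, hr1]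
  have inv_rel : ∀ (g : G₁) (n : G₂), l g x = r x n → l g⁻¹ x = r x n⁻¹ := by
    intro g n hg
    have h1 : l g (r x n⁻¹) = x := by
      rw [← hcompat, hg, ← hrmul, mul_inv_cancel, hr1]
    calc l g⁻¹ x = l g⁻¹ (l g (r x n⁻¹)) := by rw [h1]
      _ = l (g⁻¹ * g) (r x n⁻¹) := (hlmul _ _ _).symm
      _ = r x n⁻¹ := by rw [inv_mul_cancel, hl1]
  have part1 : ∀ n : G₂, (∃ g : G₁, l g x = r x n) → n ∈ Subgroup.normalizer (H : Set G₂) := by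
    rintro n ⟨g, hg⟩
    rw [Subgroup.mem_normalizer_iff]
    intro h
    constructor
    · intro hh
      exact fix g n hg h hh
    · intro hh
      have := fix g⁻¹ n⁻¹ (inv_rel g n hg) _ hh
      have e : n⁻¹ * (n * h * n⁻¹) * n⁻¹⁻¹ = h := by group
      rwa [e] at this
  -- equality of cosets from equality of action
  have cosetEq : ∀ (n m : G₂) (hn : n ∈ Subgroup.normalizer (H : Set G₂)) (hm : m ∈ Subgroup.normalizer (H : Set G₂)),
      r x n = r x m →
      (QuotientGroup.mk ⟨n, hn⟩ : Subgroup.normalizer (H : Set G₂) ⧸ H.subgroupOf (Subgroup.normalizer (H : Set G₂)))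
        = QuotientGroup.mk ⟨m, hm⟩ := by
    intro n m hn hm hrel
    rw [QuotientGroup.eq]
    rw [Subgroup.mem_subgroupOf]
    have h1 : m * n⁻¹ ∈ H := by
      rw [memH]
      rw [hrmul, ← hrel, ← hrmul, mul_inv_cancel, hr1]
    have : n⁻¹ * (m * n⁻¹) * n ∈ H := by
      rw [Subgroup.mem_normalizer_iff] at hn
      have := (hn (n⁻¹ * (m * n⁻¹) * n)).mpr
      apply this
      have e : n * (n⁻¹ * (m * n⁻¹) * n) * n⁻¹ = m * n⁻¹ := by group
      rwa [e]
    have e2 : n⁻¹ * (m * n⁻¹) * n = n⁻¹ * m := by group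
    rw [e2] at this
    exact this
  -- choice of representative
  have spec : ∀ g : G₁, r x (Classical.choose (hrtrans x (l g x))) = l g x :=
    fun g => Classical.choose_spec (hrtrans x (l g x))
  set pick : G₁ → G₂ := fun g => Classical.choose (hrtrans x (l g x)) with hpick
  have pickmem : ∀ g : G₁, pick g ∈ Subgroup.normalizer (H : Set G₂) :=
    fun g => part1 _ ⟨g, (spec g).symm⟩
  have mulrel : ∀ a b : G₁, r x (pick (a * b)) = r x (pick a * pick b) := by
    intro a b
    rw [spec, hrmul, spec, hlmul, ← spec b, hcompat]
  set πfun : G₁ → Subgroup.normalizer (H : Set G₂) ⧸ H.subgroupOf (Subgroup.normalizer (H : Set G₂)) :=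
    fun g => QuotientGroup.mk ⟨pick g, pickmem g⟩ with hπfun
  have πmul : ∀ a b : G₁, πfun (a * b) = πfun a * πfun b := by
    intro a b
    show (QuotientGroup.mk ⟨pick (a*b), pickmem _⟩ : Subgroup.normalizer (H : Set G₂) ⧸ H.subgroupOf (Subgroup.normalizer (H : Set G₂)))
        = QuotientGroup.mk ⟨pick a, pickmem a⟩ * QuotientGroup.mk ⟨pick b, pickmem b⟩
    rw [← QuotientGroup.mk_mul]
    exact cosetEq _ _ _ (Subgroup.mul_mem _ (pickmem a) (pickmem b)) (mulrel a b)
  set π : G₁ →* Subgroup.normalizer (H : Set G₂) ⧸ H.subgroupOf (Subgroup.normalizer (H : Set G₂)) := MonoidHom.mk' πfun πmul with hπ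
  have πspec : ∀ (g : G₁) (n : Subgroup.normalizer (H : Set G₂)),
      π g = QuotientGroup.mk n → l g x = r x (n : G₂) := by
    intro g n hgn
    have : (⟨pick g, pickmem g⟩ : Subgroup.normalizer (H : Set G₂))⁻¹ * n ∈ H.subgroupOf (Subgroup.normalizer (H : Set G₂)) := by
      rw [← QuotientGroup.eq]
      exact hgn
    rw [Subgroup.mem_subgroupOf] at this
    rw [memH] at this
    simp only [Subgroup.coe_mul, Subgroup.coe_inv, Subgroup.coe_mk] at this
    have e : (n : G₂) = pick g * ((pick g)⁻¹ * (n : G₂)) := by group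
    rw [e, hrmul, spec, hcompat, this]
  -- property of any π' satisfying the spec
  have ker_eq : ∀ π' : G₁ →* Subgroup.normalizer (H : Set G₂) ⧸ H.subgroupOf (Subgroup.normalizer (H : Set G₂)),
      (∀ (g : G₁) (n : Subgroup.normalizer (H : Set G₂)), π' g = QuotientGroup.mk n → l g x = r x (n : G₂)) →
      π'.ker = stabL l hl1 hlmul x := by
    intro π' hπ'
    ext g
    rw [MonoidHom.mem_ker]
    constructor
    · intro h1
      have : l g x = r x ((1 : Subgroup.normalizer (H : Set G₂)) : G₂) := hπ' g 1 (by rw [h1]; rfl)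
      exact (by simpa [hr1] using this : l g x = x)
    · intro hg
      obtain ⟨n, hn⟩ := QuotientGroup.mk_surjective (π' g)
      have hln : l g x = r x (n : G₂) := hπ' g n hn.symm
      have : (n : G₂) ∈ H := by rw [memH, ← hln]; exact hg
      rw [← hn, QuotientGroup.eq_one_iff, Subgroup.mem_subgroupOf]
      exact this
  refine ⟨part1, ⟨π, πspec, ?_⟩, ker_eq⟩
  intro π' hπ'
  ext g
  obtain ⟨n, hn⟩ := QuotientGroup.mk_surjective (π' g)
  have hln : l g x = r x (n : G₂) := hπ' g n hn.symm
  have : π g = QuotientGroup.mk ⟨(n : G₂), n.2⟩ := by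
    have := cosetEq (pick g) (n : G₂) (pickmem g) n.2 (by rw [spec, hln])
    exact this
  rw [← hn, this]
end

section
/- Let G₁, G₂ be groups, k a field, X a G₁-G₂-biset, and (μ_l, μ_r, μ_m) a bimodule datum on X. Then for every x ∈ X the map μ_m(−,x,−) : Stab_l(x) × Stab_r(x) → kˣ is bimultiplicative: for all n₁, n₁′ ∈ Stab_l(x) and n₂, n₂′ ∈ Stab_r(x) one has μ_m(n₁n₁′, x, n₂) = μ_m(n₁, x, n₂)·μ_m(n₁′, x, n₂) and μ_m(n₁, x, n₂n₂′) = μ_m(n₁, x, n₂)·μ_m(n₁, x, n₂′). In particular, n₁ ↦ μ_m(n₁, x, −) is a group homomorphism from Stab_l(x) to Hom(Stab_r(x), kˣ). -/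
/-- For a bimodule datum `(μ_l, μ_r, μ_m)` on a `G₁`-`G₂`-biset `X`, the map
`μ_m(−,x,−)` is bimultiplicative on `Stab_l(x) × Stab_r(x)` for every `x ∈ X`. -/
theorem bimodule_datum_pairing_bimultiplicative
    {G₁ G₂ X k : Type*} [Group G₁] [Group G₂] [Field k]
    (l : G₁ → X → X) (r : X → G₂ → X)
    (hl1 : ∀ x, l 1 x = x) (hlmul : ∀ g g' x, l (g * g') x = l g (l g' x))
    (hr1 : ∀ x, r x 1 = x) (hrmul : ∀ x h h', r x (h * h') = r (r x h) h')
    (hcompat : ∀ g x h, r (l g x) h = l g (r x h))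
    (μl : G₁ → G₁ → X → kˣ) (μr : X → G₂ → G₂ → kˣ) (μm : G₁ → X → G₂ → kˣ)
    (heq1 : ∀ (σ : G₁) (x : X) (ρ φ : G₂),
      μr (l σ x) ρ φ * μm σ x (ρ * φ) = μm σ x ρ * μm σ (r x ρ) φ * μr x ρ φ)
    (heq2 : ∀ (σ τ : G₁) (x : X) (φ : G₂),
      μm (σ * τ) x φ * μl σ τ (r x φ) = μl σ τ x * μm σ (l τ x) φ * μm τ x φ)
    (x : X) :
    ∀ n₁ n₁' : G₁, l n₁ x = x → l n₁' x = x →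
    ∀ n₂ n₂' : G₂, r x n₂ = x → r x n₂' = x →
      μm (n₁ * n₁') x n₂ = μm n₁ x n₂ * μm n₁' x n₂ ∧
      μm n₁ x (n₂ * n₂') = μm n₁ x n₂ * μm n₁ x n₂' := by
  intro n₁ n₁' h1 h1' n₂ n₂' h2 h2'
  constructor
  · have h := heq2 n₁ n₁' x n₂
    rw [h2, h1'] at h
    have h' : μm (n₁ * n₁') x n₂ * μl n₁ n₁' x =
        (μm n₁ x n₂ * μm n₁' x n₂) * μl n₁ n₁' x := by
      rw [h, mul_assoc, mul_comm]
    exact mul_right_cancel h'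
  · have h := heq1 n₁ x n₂ n₂'
    rw [h1, h2] at h
    have h' : μm n₁ x (n₂ * n₂') * μr x n₂ n₂' =
        (μm n₁ x n₂ * μm n₁ x n₂') * μr x n₂ n₂' := by
      rw [mul_comm, h]
    exact mul_right_cancel h'
end

section
/- Let G₁, G₂ be finite groups with |G₁| = |G₂|, k an algebraically closed field of characteristic zero, X a bitransitive G₁-G₂-biset, (μ_l, μ_r, μ_m) a bimodule datum on X, and x ∈ X such that the pairing μ_m(−,x,−) : Stab_l(x) × Stab_r(x) → kˣ is non-degenerate. Then Stab_l(x) is a normal abelian subgroup of G₁, Stab_r(x) is a normal abelian subgroup of G₂, and there is a group isomorphism Stab_l(x) ≅ Stab_r(x). -/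
/-- Let `G₁`, `G₂` be finite groups of the same order, `k` an algebraically closed field of
characteristic zero, `X` a bitransitive `G₁`-`G₂`-biset, `(μ_l, μ_r, μ_m)` a bimodule datum
on `X`, and `x ∈ X` such that the pairing `μ_m(−,x,−)` is non-degenerate. Then `Stab_l(x)`
is a normal abelian subgroup of `G₁`, `Stab_r(x)` is a normal abelian subgroup of `G₂`, and
`Stab_l(x) ≅ Stab_r(x)` as groups. -/
theorem nondegenerate_pairing_stabilizers
    {G₁ G₂ X k : Type*} [Group G₁] [Group G₂] [Finite G₁] [Finite G₂]
    [Field k] [IsAlgClosed k] [CharZero k]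
    (hcard : Nat.card G₁ = Nat.card G₂)
    (l : G₁ → X → X) (r : X → G₂ → X)
    (hl1 : ∀ x, l 1 x = x) (hlmul : ∀ g g' x, l (g * g') x = l g (l g' x))
    (hr1 : ∀ x, r x 1 = x) (hrmul : ∀ x h h', r x (h * h') = r (r x h) h')
    (hcompat : ∀ g x h, r (l g x) h = l g (r x h))
    (hltrans : ∀ x y : X, ∃ g : G₁, l g x = y)
    (hrtrans : ∀ x y : X, ∃ h : G₂, r x h = y)
    (μl : G₁ → G₁ → X → kˣ) (μr : X → G₂ → G₂ → kˣ) (μm : G₁ → X → G₂ → kˣ)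
    (heq1 : ∀ (σ : G₁) (x : X) (ρ φ : G₂),
      μr (l σ x) ρ φ * μm σ x (ρ * φ) = μm σ x ρ * μm σ (r x ρ) φ * μr x ρ φ)
    (heq2 : ∀ (σ τ : G₁) (x : X) (φ : G₂),
      μm (σ * τ) x φ * μl σ τ (r x φ) = μl σ τ x * μm σ (l τ x) φ * μm τ x φ)
    (x : X)
    (hnd₁ : ∀ n₁ : ↥(stabL l hl1 hlmul x), (n₁ : G₁) ≠ 1 →
        ∃ n₂ : ↥(stabR r hr1 hrmul x), μm (n₁ : G₁) x (n₂ : G₂) ≠ 1)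
    (hnd₂ : ∀ n₂ : ↥(stabR r hr1 hrmul x), (n₂ : G₂) ≠ 1 →
        ∃ n₁ : ↥(stabL l hl1 hlmul x), μm (n₁ : G₁) x (n₂ : G₂) ≠ 1) :
    (stabL l hl1 hlmul x).Normal ∧
    (∀ a b : ↥(stabL l hl1 hlmul x), a * b = b * a) ∧
    (stabR r hr1 hrmul x).Normal ∧
    (∀ a b : ↥(stabR r hr1 hrmul x), a * b = b * a) ∧
    Nonempty (↥(stabL l hl1 hlmul x) ≃* ↥(stabR r hr1 hrmul x)) := by

  set N₁ := stabL l hl1 hlmul x with hN₁def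
  set N₂ := stabR r hr1 hrmul x with hN₂def
  -- multiplicativity in the left variable
  have mulL : ∀ (σ τ : G₁), l τ x = x → ∀ m : G₂, r x m = x →
      μm (σ * τ) x m = μm σ x m * μm τ x m := by
    intro σ τ hτ m hm
    have h := heq2 σ τ x m
    rw [hm, hτ, mul_comm (μm (σ * τ) x m) (μl σ τ x),
      mul_assoc (μl σ τ x) (μm σ x m) (μm τ x m)] at h
    exact mul_left_cancel h
  -- multiplicativity in the right variable
  have mulR : ∀ (n : G₁), l n x = x → ∀ m m' : G₂, r x m = x →
      μm n x (m * m') = μm n x m * μm n x m' := by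
    intro n hn m m' hm
    have h := heq1 n x m m'
    rw [hn, hm, mul_comm (μm n x m * μm n x m') (μr x m m')] at h
    exact mul_left_cancel h
  have oneR : ∀ n : G₁, l n x = x → μm n x 1 = 1 := by
    intro n hn
    have h := mulR n hn 1 1 (hr1 x)
    rw [one_mul] at h
    exact (left_eq_mul.mp h)
  have oneL : ∀ m : G₂, r x m = x → μm 1 x m = 1 := by
    intro m hm
    have h := mulL 1 1 (hl1 x) m hm
    rw [one_mul] at h
    exact (left_eq_mul.mp h)
  have invL : ∀ (σ : G₁), l σ⁻¹ x = x → ∀ m : G₂, r x m = x →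
      μm σ⁻¹ x m = (μm σ x m)⁻¹ := by
    intro σ hσ m hm
    have h := mulL σ σ⁻¹ hσ m hm
    rw [mul_inv_cancel, oneL m hm] at h
    exact eq_inv_of_mul_eq_one_right h.symm
  have invR : ∀ (m : G₂), r x m⁻¹ = x → ∀ n : G₁, l n x = x →
      μm n x m⁻¹ = (μm n x m)⁻¹ := by
    intro m hminv n hn
    have hm : r x m = x := by
      have : r x m⁻¹ = x := hminv
      calc r x m = r (r x m⁻¹) m := by rw [this]
        _ = r x (m⁻¹ * m) := (hrmul _ _ _).symm
        _ = x := by rw [inv_mul_cancel, hr1]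
    have h := mulR n hn m m⁻¹ hm
    rw [mul_inv_cancel, oneR n hn] at h
    exact eq_inv_of_mul_eq_one_right h.symm
  -- abelian-ness of the left stabilizer
  have commL : ∀ a b : ↥N₁, a * b = b * a := by
    intro a b
    by_contra hne
    have hd : ((a * b) * (b * a)⁻¹ : ↥N₁) ≠ 1 := by
      intro h; exact hne (mul_inv_eq_one.mp h)
    have hd' : (((a * b) * (b * a)⁻¹ : ↥N₁) : G₁) ≠ 1 := by
      rwa [ne_eq, OneMemClass.coe_eq_one]
    obtain ⟨n₂, hn₂⟩ := hnd₁ _ hd'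
    apply hn₂
    have hm : r x ↑n₂ = x := n₂.2
    have ha : l (↑a : G₁) x = x := a.2
    have hb : l (↑b : G₁) x = x := b.2
    have hba : ((↑b * ↑a : G₁)) ∈ N₁ := mul_mem b.2 a.2
    have hbainv : l ((↑b * ↑a : G₁))⁻¹ x = x := inv_mem hba
    show μm ((a : G₁) * (b : G₁) * ((b : G₁) * (a : G₁))⁻¹) x ↑n₂ = 1
    rw [mulL _ _ hbainv _ hm, mulL _ _ hb _ hm,
      invL _ hbainv _ hm, mulL _ _ ha _ hm, mul_inv_eq_one]
    exact mul_comm _ _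
  -- abelian-ness of the right stabilizer
  have commR : ∀ a b : ↥N₂, a * b = b * a := by
    intro a b
    by_contra hne
    have hd : ((a * b) * (b * a)⁻¹ : ↥N₂) ≠ 1 := by
      intro h; exact hne (mul_inv_eq_one.mp h)
    have hd' : (((a * b) * (b * a)⁻¹ : ↥N₂) : G₂) ≠ 1 := by
      rwa [ne_eq, OneMemClass.coe_eq_one]
    obtain ⟨n₁, hn₁⟩ := hnd₂ _ hd'
    apply hn₁
    have hn : l (↑n₁ : G₁) x = x := n₁.2
    have ha : r x (↑a : G₂) = x := a.2
    have hb : r x (↑b : G₂) = x := b.2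
    have hab : ((↑a * ↑b : G₂)) ∈ N₂ := mul_mem a.2 b.2
    have hba : ((↑b * ↑a : G₂)) ∈ N₂ := mul_mem b.2 a.2
    have hbainv : r x ((↑b * ↑a : G₂))⁻¹ = x := inv_mem hba
    show μm (↑n₁) x ((a : G₂) * (b : G₂) * ((b : G₂) * (a : G₂))⁻¹) = 1
    rw [mulR _ hn _ _ hab, mulR _ hn _ _ ha,
      invR _ hbainv _ hn, mulR _ hn _ _ hb, mul_inv_eq_one]
    exact mul_comm _ _
  -- normality of the left stabilizer
  have normL : N₁.Normal := by
    constructor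
    intro n hn g
    have hn' : l n x = x := hn
    show l (g * n * g⁻¹) x = x
    obtain ⟨h, hh⟩ := hrtrans x (l g⁻¹ x)
    have key : l n (l g⁻¹ x) = l g⁻¹ x := by
      rw [← hh, ← hcompat, hn']
    calc l (g * n * g⁻¹) x = l g (l n (l g⁻¹ x)) := by rw [hlmul, hlmul]
      _ = l g (l g⁻¹ x) := by rw [key]
      _ = x := by rw [← hlmul, mul_inv_cancel, hl1]
  -- normality of the right stabilizer
  have normR : N₂.Normal := by
    constructor
    intro m hm g
    have hm' : r x m = x := hm
    show r x (g * m * g⁻¹) = x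
    obtain ⟨σ, hσ⟩ := hltrans x (r x g)
    have key : r (r x g) m = r x g := by
      rw [← hσ, hcompat, hm']
    calc r x (g * m * g⁻¹) = r (r (r x g) m) g⁻¹ := by rw [hrmul, hrmul]
      _ = r (r x g) g⁻¹ := by rw [key]
      _ = x := by rw [← hrmul, mul_inv_cancel, hr1]
  -- the isomorphism
  letI cg₁ : CommGroup ↥N₁ := { (inferInstance : Group ↥N₁) with mul_comm := commL }
  letI cg₂ : CommGroup ↥N₂ := { (inferInstance : Group ↥N₂) with mul_comm := commR }
  haveI : NeZero ((Monoid.exponent ↥N₁ : k)) :=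
    ⟨Nat.cast_ne_zero.mpr Monoid.exponent_ne_zero_of_finite⟩
  haveI : NeZero ((Monoid.exponent ↥N₂ : k)) :=
    ⟨Nat.cast_ne_zero.mpr Monoid.exponent_ne_zero_of_finite⟩
  have e₁ : Nonempty ((↥N₁ →* kˣ) ≃* ↥N₁) :=
    CommGroup.monoidHom_mulEquiv_of_hasEnoughRootsOfUnity ↥N₁ k
  have e₂ : Nonempty ((↥N₂ →* kˣ) ≃* ↥N₂) :=
    CommGroup.monoidHom_mulEquiv_of_hasEnoughRootsOfUnity ↥N₂ k
  let f : ↥N₁ →* (↥N₂ →* kˣ) :=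
    { toFun := fun n =>
        { toFun := fun m => μm (↑n) x (↑m)
          map_one' := oneR _ n.2
          map_mul' := fun m m' => mulR _ n.2 _ _ m.2 }
      map_one' := MonoidHom.ext fun m => oneL _ m.2
      map_mul' := fun a b => MonoidHom.ext fun m => mulL _ _ b.2 _ m.2 }
  let g : ↥N₂ →* (↥N₁ →* kˣ) :=
    { toFun := fun m =>
        { toFun := fun n => μm (↑n) x (↑m)
          map_one' := oneL _ m.2
          map_mul' := fun a b => mulL _ _ b.2 _ m.2 }
      map_one' := MonoidHom.ext fun n => oneR _ n.2
      map_mul' := fun a b => MonoidHom.ext fun n => mulR _ n.2 _ _ a.2 }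
  have hfinj : Function.Injective f := by
    rw [injective_iff_map_eq_one]
    intro n hn
    by_contra hne
    have hne' : (↑n : G₁) ≠ 1 := by simpa using hne
    obtain ⟨m, hm⟩ := hnd₁ n hne'
    exact hm (DFunLike.congr_fun hn m)
  have hginj : Function.Injective g := by
    rw [injective_iff_map_eq_one]
    intro m hm
    by_contra hne
    have hne' : (↑m : G₂) ≠ 1 := by simpa using hne
    obtain ⟨n, hn⟩ := hnd₂ m hne'
    exact hn (DFunLike.congr_fun hm n)
  haveI : Finite (↥N₂ →* kˣ) := Finite.of_equiv _ e₂.some.toEquiv.symm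
  haveI : Finite (↥N₁ →* kˣ) := Finite.of_equiv _ e₁.some.toEquiv.symm
  have c1 : Nat.card ↥N₁ ≤ Nat.card ↥N₂ := by
    have h := Nat.card_le_card_of_injective f hfinj
    rwa [Nat.card_congr e₂.some.toEquiv] at h
  have c2 : Nat.card ↥N₂ ≤ Nat.card ↥N₁ := by
    have h := Nat.card_le_card_of_injective g hginj
    rwa [Nat.card_congr e₁.some.toEquiv] at h
  have hc : Nat.card ↥N₁ = Nat.card (↥N₂ →* kˣ) := by
    rw [Nat.card_congr e₂.some.toEquiv]
    exact le_antisymm c1 c2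
  have hbij : Function.Bijective f := (Nat.bijective_iff_injective_and_card f).mpr ⟨hfinj, hc⟩
  exact ⟨normL, commL, normR, commR, ⟨(MulEquiv.ofBijective f hbij).trans e₂.some⟩⟩
end
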